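/- Let η ∈ (0,1), and let (α_i)_{i≥1} be a non-increasing sequence of positive reals with α_1 = 1. Then for every k ≥ 1: k·α_k·η^k·Σ_{i=1}^k (1/(i·α_i))·η^{−i} ≤ 1 + sup_{k≥3} k(1 + log(k/2))·η^{k/2} + 2η/(1−η). -/

import Mathlib

lemma psb_geom (η : ℝ) (h0 : 0 ≤ η) (h1 : η < 1) (k : ℕ) :
    ∑ j ∈ Finset.Icc 1 k, η ^ j ≤ η / (1 - η) := by
  rw [← Finset.Ico_add_one_right_eq_Icc, Finset.sum_Ico_eq_sum_range]
  simp only [Nat.add_sub_cancel]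
  have : ∑ i ∈ Finset.range k, η ^ (1 + i) = η * ∑ i ∈ Finset.range k, η ^ i := by
    rw [Finset.mul_sum]; exact Finset.sum_congr rfl fun i _ => by ring
  rw [this, div_eq_mul_inv]
  refine mul_le_mul_of_nonneg_left ?_ h0
  calc ∑ i ∈ Finset.range k, η ^ i ≤ ∑' i : ℕ, η ^ i :=
        Summable.sum_le_tsum _ (fun i _ => pow_nonneg h0 i) (summable_geometric_of_lt_one h0 h1)
    _ = (1 - η)⁻¹ := tsum_geometric_of_lt_one h0 h1

lemma psb_harm (m : ℕ) :
    ∑ i ∈ Finset.Icc 1 m, ((i : ℝ))⁻¹ ≤ 1 + Real.log m := by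
  have h := harmonic_le_one_add_log m
  have h2 : ((harmonic m : ℚ) : ℝ) = ∑ i ∈ Finset.Icc 1 m, ((i : ℝ))⁻¹ := by
    rw [harmonic_eq_sum_Icc]; push_cast; rfl
  linarith [h, h2.ge]

lemma psb_term_le (η : ℝ) (hη : 0 < η) (hη1 : η < 1) (n : ℕ) (hn : 3 ≤ n) :
    (n : ℝ) * (1 + Real.log ((n : ℝ) / 2)) * η ^ ((n : ℝ) / 2)
      ≤ 16 / (Real.log η) ^ 2 := by
  have hn0 : (3 : ℝ) ≤ (n : ℝ) := by exact_mod_cast hn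
  have hlog : Real.log η < 0 := Real.log_neg hη hη1
  set L : ℝ := -Real.log η with hLdef
  have hL : 0 < L := by simp only [hLdef]; linarith
  have hrw : η ^ ((n : ℝ) / 2) = (Real.exp ((n : ℝ) / 2 * L))⁻¹ := by
    rw [Real.rpow_def_of_pos hη, ← Real.exp_neg, hLdef]; ring_nf
  have hfac : 1 + Real.log ((n : ℝ) / 2) ≤ (n : ℝ) := by
    have := Real.log_le_sub_one_of_pos (show (0 : ℝ) < (n : ℝ) / 2 by linarith)
    linarith
  have hexp : ((n : ℝ) / 2 * L / 2) ^ 2 ≤ Real.exp ((n : ℝ) / 2 * L) := by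
    have h1 := Real.add_one_le_exp ((n : ℝ) / 2 * L / 2)
    have h2 : Real.exp ((n : ℝ) / 2 * L) =
        Real.exp ((n : ℝ) / 2 * L / 2) * Real.exp ((n : ℝ) / 2 * L / 2) := by
      rw [← Real.exp_add]; ring_nf
    have hx : 0 ≤ (n : ℝ) / 2 * L / 2 := by positivity
    nlinarith [mul_le_mul h1 h1 (by linarith) (Real.exp_pos ((n : ℝ) / 2 * L / 2)).le]
  have hxpos : 0 < ((n : ℝ) / 2 * L / 2) ^ 2 := by positivity
  have hηle : η ^ ((n : ℝ) / 2) ≤ (((n : ℝ) / 2 * L / 2) ^ 2)⁻¹ := by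
    rw [hrw]
    exact inv_anti₀ hxpos hexp
  have hb : 0 ≤ 1 + Real.log ((n : ℝ) / 2) := by
    have : (0:ℝ) ≤ Real.log ((n : ℝ) / 2) :=
      Real.log_nonneg (by linarith)
    linarith
  calc (n : ℝ) * (1 + Real.log ((n : ℝ) / 2)) * η ^ ((n : ℝ) / 2)
      ≤ ((n : ℝ) * (n : ℝ)) * (((n : ℝ) / 2 * L / 2) ^ 2)⁻¹ := by
        apply mul_le_mul
        · nlinarith
        · exact hηle
        · exact Real.rpow_nonneg hη.le _
        · nlinarith
    _ = 16 / L ^ 2 := by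
        field_simp
        ring
    _ = 16 / (Real.log η) ^ 2 := by rw [hLdef]; ring_nf

lemma psb_bdd (η : ℝ) (hη : 0 < η) (hη1 : η < 1) :
    BddAbove (Set.range fun k : {k : ℕ // 3 ≤ k} =>
      (k : ℝ) * (1 + Real.log ((k : ℝ) / 2)) * η ^ ((k : ℝ) / 2)) := by
  refine ⟨16 / (Real.log η) ^ 2, ?_⟩
  rintro y ⟨⟨n, hn⟩, rfl⟩
  exact psb_term_le η hη hη1 n hn

/-- Bound appearing in the proof of Proposition 3.5. -/
theorem partial_sum_bound (η : ℝ) (hη : 0 < η) (hη1 : η < 1)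
    (α : ℕ → ℝ) (hα1 : α 1 = 1)
    (hαpos : ∀ i, 1 ≤ i → 0 < α i)
    (hαmono : ∀ i, 1 ≤ i → α (i + 1) ≤ α i) :
    ∀ k : ℕ, 1 ≤ k →
      (k : ℝ) * α k * η ^ k * ∑ i ∈ Finset.Icc 1 k, (η⁻¹) ^ i / ((i : ℝ) * α i)
        ≤ 1 + (⨆ k : {k : ℕ // 3 ≤ k},
            (k : ℝ) * (1 + Real.log ((k : ℝ) / 2)) * η ^ ((k : ℝ) / 2)) +
          2 * η / (1 - η) := by
  intro k hk
  have h1η : 0 < 1 - η := by linarith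
  set S : ℝ := ⨆ k : {k : ℕ // 3 ≤ k},
      (k : ℝ) * (1 + Real.log ((k : ℝ) / 2)) * η ^ ((k : ℝ) / 2) with hSdef
  have hbdd := psb_bdd η hη hη1
  have hSk : ∀ n : ℕ, 3 ≤ n →
      (n : ℝ) * (1 + Real.log ((n : ℝ) / 2)) * η ^ ((n : ℝ) / 2) ≤ S := by
    intro n hn
    exact le_ciSup hbdd ⟨n, hn⟩
  have hS0 : 0 ≤ S := by
    refine le_trans ?_ (hSk 3 le_rfl)
    have hl : (0:ℝ) ≤ Real.log ((3 : ℝ) / 2) := Real.log_nonneg (by norm_num)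
    have : (0:ℝ) ≤ η ^ ((3 : ℝ) / 2) := Real.rpow_nonneg hη.le _
    push_cast
    nlinarith
  have hgeo0 : 0 ≤ 2 * η / (1 - η) := by positivity
  -- monotonicity
  have hmono : ∀ i j, 1 ≤ i → i ≤ j → α j ≤ α i := by
    intro i j h1 hij
    induction j, hij using Nat.le_induction with
    | base => exact le_rfl
    | succ n hn ih => exact (hαmono n (h1.trans hn)).trans ih
  -- termwise bound
  have hterm : ∀ i ∈ Finset.Icc 1 k,
      (k : ℝ) * α k * η ^ k * ((η⁻¹) ^ i / ((i : ℝ) * α i))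
        ≤ ((k : ℝ) / (i : ℝ)) * η ^ (k - i) := by
    intro i hi
    rw [Finset.mem_Icc] at hi
    obtain ⟨h1i, hik⟩ := hi
    have hαi := hαpos i h1i
    have hαk := hαpos k hk
    have hαki : α k ≤ α i := hmono i k h1i hik
    have hi0 : (0:ℝ) < (i:ℝ) := by exact_mod_cast h1i
    have hpow : η ^ (k - i) = η ^ k * (η⁻¹) ^ i := by
      rw [pow_sub₀ η hη.ne' hik, inv_pow]
    have heq : (k : ℝ) * α k * η ^ k * ((η⁻¹) ^ i / ((i : ℝ) * α i))
        = ((k : ℝ) / (i : ℝ)) * η ^ (k - i) * (α k / α i) := by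
      rw [hpow]; field_simp
    rw [heq]
    have hdiv : α k / α i ≤ 1 := (div_le_one hαi).mpr hαki
    have hpos : 0 ≤ ((k : ℝ) / (i : ℝ)) * η ^ (k - i) := by positivity
    nlinarith
  have hsum1 : (k : ℝ) * α k * η ^ k * ∑ i ∈ Finset.Icc 1 k, (η⁻¹) ^ i / ((i : ℝ) * α i)
      ≤ ∑ i ∈ Finset.Icc 1 k, ((k : ℝ) / (i : ℝ)) * η ^ (k - i) := by
    rw [Finset.mul_sum]
    exact Finset.sum_le_sum hterm
  by_cases hk3 : 3 ≤ k
  · -- main case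
    set m := k / 2 with hmdef
    have hm1 : 1 ≤ m := by omega
    have hmk : m + 1 ≤ k := by omega
    have h2m : 2 * m ≤ k := by omega
    -- split the sum
    have hsplit : ∑ i ∈ Finset.Icc 1 k, ((k : ℝ) / (i : ℝ)) * η ^ (k - i)
        = (∑ i ∈ Finset.Ioc 0 m, ((k : ℝ) / (i : ℝ)) * η ^ (k - i))
          + (∑ i ∈ Finset.Ioc m (k-1), ((k : ℝ) / (i : ℝ)) * η ^ (k - i))
          + ((k : ℝ) / (k : ℝ)) * η ^ (k - k) := by
      have e1 : Finset.Icc 1 k = Finset.Ioc 0 k := by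
        rw [← Finset.Icc_add_one_left_eq_Ioc]; rfl
      have hsp2 : ∀ f : ℕ → ℝ, ∑ i ∈ Finset.Ioc m k, f i
          = ∑ i ∈ Finset.Ioc m (k-1), f i + f k := by
        intro f
        obtain ⟨p, rfl⟩ : ∃ p, k = p + 1 := ⟨k - 1, by omega⟩
        simp only [Nat.add_sub_cancel]
        exact Finset.sum_Ioc_succ_top (by omega) _
      rw [e1, ← Finset.sum_Ioc_consecutive _ (Nat.zero_le m) (by omega : m ≤ k),
        hsp2 (fun i => (k : ℝ) / (i : ℝ) * η ^ (k - i))]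
      ring
    -- last term
    have hlast : ((k : ℝ) / (k : ℝ)) * η ^ (k - k) = 1 := by
      have : (k:ℝ) ≠ 0 := by positivity
      simp [this]
    -- middle part
    have hmid : ∑ i ∈ Finset.Ioc m (k-1), ((k : ℝ) / (i : ℝ)) * η ^ (k - i)
        ≤ 2 * η / (1 - η) := by
      have step1 : ∑ i ∈ Finset.Ioc m (k-1), ((k : ℝ) / (i : ℝ)) * η ^ (k - i)
          ≤ ∑ i ∈ Finset.Ioc m (k-1), 2 * η ^ (k - i) := by
        refine Finset.sum_le_sum fun i hi => ?_
        rw [Finset.mem_Ioc] at hi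
        have hi0 : (0:ℝ) < (i:ℝ) := by
          have : 1 ≤ i := by omega
          exact_mod_cast this
        have hki : (k:ℝ) ≤ 2 * (i:ℝ) := by
          have : k ≤ 2 * i := by omega
          exact_mod_cast this
        have hd : (k:ℝ) / (i:ℝ) ≤ 2 := by
          rw [div_le_iff₀ hi0]; linarith
        exact mul_le_mul_of_nonneg_right hd (pow_nonneg hη.le _)
      have step2 : ∑ i ∈ Finset.Ioc m (k-1), η ^ (k - i) ≤ η / (1 - η) := by
        have himg : ∑ i ∈ Finset.Ioc m (k-1), η ^ (k - i)
            = ∑ j ∈ (Finset.Ioc m (k-1)).image (fun i => k - i), η ^ j := by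
          rw [Finset.sum_image]
          intro x hx y hy hxy
          rw [Finset.mem_coe, Finset.mem_Ioc] at hx hy
          simp only at hxy
          omega
        rw [himg]
        refine le_trans (Finset.sum_le_sum_of_subset_of_nonneg ?_
          (fun j _ _ => pow_nonneg hη.le j)) (psb_geom η hη.le hη1 k)
        intro j hj
        rw [Finset.mem_image] at hj
        obtain ⟨i, hi, rfl⟩ := hj
        rw [Finset.mem_Ioc] at hi
        rw [Finset.mem_Icc]
        omega
      calc ∑ i ∈ Finset.Ioc m (k-1), ((k : ℝ) / (i : ℝ)) * η ^ (k - i)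
          ≤ ∑ i ∈ Finset.Ioc m (k-1), 2 * η ^ (k - i) := step1
        _ = 2 * ∑ i ∈ Finset.Ioc m (k-1), η ^ (k - i) := by rw [Finset.mul_sum]
        _ ≤ 2 * (η / (1 - η)) := by linarith [step2]
        _ = 2 * η / (1 - η) := by ring
    -- first part
    have hfirst : ∑ i ∈ Finset.Ioc 0 m, ((k : ℝ) / (i : ℝ)) * η ^ (k - i) ≤ S := by
      have hkr : (0:ℝ) ≤ (k:ℝ) := by positivity
      have hrp : (0:ℝ) ≤ η ^ ((k:ℝ)/2) := Real.rpow_nonneg hη.le _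
      have step1 : ∑ i ∈ Finset.Ioc 0 m, ((k : ℝ) / (i : ℝ)) * η ^ (k - i)
          ≤ ∑ i ∈ Finset.Ioc 0 m, ((k : ℝ) / (i : ℝ)) * η ^ ((k:ℝ)/2) := by
        refine Finset.sum_le_sum fun i hi => ?_
        rw [Finset.mem_Ioc] at hi
        have hi0 : (0:ℝ) < (i:ℝ) := by exact_mod_cast hi.1
        have hpe : η ^ (k - i) ≤ η ^ ((k:ℝ)/2) := by
          rw [← Real.rpow_natCast η (k - i)]
          apply Real.rpow_le_rpow_of_exponent_ge hη hη1.le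
          have : ((k - i : ℕ) : ℝ) = (k:ℝ) - (i:ℝ) := by
            have : i ≤ k := by omega
            push_cast [this]
            ring
          rw [this]
          have h2i : 2 * (i:ℝ) ≤ (k:ℝ) := by
            have : 2 * i ≤ k := by omega
            exact_mod_cast this
          linarith
        exact mul_le_mul_of_nonneg_left hpe (by positivity)
      have step2 : ∑ i ∈ Finset.Ioc 0 m, ((k : ℝ) / (i : ℝ)) * η ^ ((k:ℝ)/2)
          = (k : ℝ) * (∑ i ∈ Finset.Icc 1 m, ((i:ℝ))⁻¹) * η ^ ((k:ℝ)/2) := by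
        have e1 : Finset.Ioc 0 m = Finset.Icc 1 m := by rw [← Finset.Icc_add_one_left_eq_Ioc]; rfl
        rw [e1, Finset.mul_sum, Finset.sum_mul]
        exact Finset.sum_congr rfl fun i _ => by rw [div_eq_mul_inv]
      have hharm : ∑ i ∈ Finset.Icc 1 m, ((i:ℝ))⁻¹ ≤ 1 + Real.log ((k:ℝ)/2) := by
        refine le_trans (psb_harm m) ?_
        have hm0 : (0:ℝ) < (m:ℝ) := by exact_mod_cast hm1
        have hmk2 : (m:ℝ) ≤ (k:ℝ)/2 := by
          have : (2:ℝ) * (m:ℝ) ≤ (k:ℝ) := by exact_mod_cast h2m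
          linarith
        have := Real.log_le_log hm0 hmk2
        linarith
      calc ∑ i ∈ Finset.Ioc 0 m, ((k : ℝ) / (i : ℝ)) * η ^ (k - i)
          ≤ ∑ i ∈ Finset.Ioc 0 m, ((k : ℝ) / (i : ℝ)) * η ^ ((k:ℝ)/2) := step1
        _ = (k : ℝ) * (∑ i ∈ Finset.Icc 1 m, ((i:ℝ))⁻¹) * η ^ ((k:ℝ)/2) := step2
        _ ≤ (k : ℝ) * (1 + Real.log ((k:ℝ)/2)) * η ^ ((k:ℝ)/2) := by
            apply mul_le_mul_of_nonneg_right _ hrp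
            exact mul_le_mul_of_nonneg_left hharm hkr
        _ ≤ S := hSk k hk3
    linarith [hsum1, hsplit ▸ (by linarith [hfirst, hmid, hlast.le] :
      (∑ i ∈ Finset.Ioc 0 m, ((k : ℝ) / (i : ℝ)) * η ^ (k - i))
        + (∑ i ∈ Finset.Ioc m (k-1), ((k : ℝ) / (i : ℝ)) * η ^ (k - i))
        + ((k : ℝ) / (k : ℝ)) * η ^ (k - k) ≤ S + 2 * η / (1 - η) + 1)]
  · -- small cases k = 1 or k = 2
    interval_cases k
    · refine hsum1.trans ?_
      norm_num [Finset.Icc_self]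
      linarith
    · have h2 : 2 * η ≤ 2 * η / (1 - η) := by
        rw [le_div_iff₀ h1η]
        nlinarith
      refine hsum1.trans ?_
      norm_num [show (Finset.Icc 1 2 : Finset ℕ) = {1, 2} from rfl]
      linarith
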